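/- Let c_min, c_max with 0 < c_min ≤ c_max, let U, β, α' be real numbers with α' > 0, and define φ̂(w) = U − β + (U/α' − U + 2β)·exp(w/(c_min·α')) for w ∈ [0, c_min]. Then for any w ∈ [0, c_min], the exact identity holds: ∫₀^w φ̂(u) du + β·w + (c_max − w)·U = α'·c_min·(φ̂(w) − β) + U·(c_max − c_min). -/
import Mathlib


theorem stmt_2 (cmin cmax U β α' : ℝ)
    (hcmin : 0 < cmin) (hcc : cmin ≤ cmax) (hα' : 0 < α')
    (φhat : ℝ → ℝ)
    (hφ : ∀ w, φhat w = U - β + (U / α' - U + 2 * β) * Real.exp (w / (cmin * α')))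
    (w : ℝ) (hw : w ∈ Set.Icc (0 : ℝ) cmin) :
    (∫ u in (0:ℝ)..w, φhat u) + β * w + (cmax - w) * U
      = α' * cmin * (φhat w - β) + U * (cmax - cmin) := by
  have hc : cmin * α' ≠ 0 := by positivity
  have hint : (∫ u in (0:ℝ)..w, φhat u)
      = (U - β) * w + (U / α' - U + 2 * β) * ((cmin * α') * (Real.exp (w / (cmin * α')) - 1)) := by
    simp only [hφ]
    rw [intervalIntegral.integral_add (intervalIntegrable_const)
      (Continuous.intervalIntegrable (by fun_prop) _ _)]
    rw [intervalIntegral.integral_const_mul, intervalIntegral.integral_comp_div (c := cmin * α')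
      (f := Real.exp) hc, integral_exp]
    simp
    ring
  rw [hint, hφ w]
  have h : α' ≠ 0 := ne_of_gt hα'
  field_simp
  ring
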